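/- Let a ≥ 2, p > 2, q > 2, d₁ > 1, d₂ > 1 and C_p, C_q, C', C'', κ_p, κ_q > 0 be real constants, and let t > 0. For τ in [0,t) define Q(τ) := [p/((a+p−2)t−(p−2)τ)] · log( C_p p^{d₁−1} (at−τ)(t−τ)^{d₁−1} / (C' ((a+p−2)t−(p−2)τ)^{d₁−1}) ) − 2 C_p κ_p p^{d₁} (at−τ)(t−τ)^{d₁−1} / ((a+p−2)t−(p−2)τ)^{d₁} + [q/((a+q−2)t−(q−2)τ)] · log( C_q q^{d₂−1} (at−τ)(t−τ)^{d₂−1} / (C'' ((a+q−2)t−(q−2)τ)^{d₂−1}) ) − 2 C_q κ_q q^{d₂} (at−τ)(t−τ)^{d₂−1} / ((a+q−2)t−(q−2)τ)^{d₂}. Then ∫₀^ξ Q(τ) dτ tends, as ξ tends to t from the left, to k₄ log t − k₅ t + k₆, where, with J₁ := ∫₀¹ dx/(a+(p−2)(1−x)), J₂ := ∫₀¹ log(a+(p−2)(1−x))/(a+(p−2)(1−x)) dx, J₃ := ∫₀¹ log(1−x)/(a+(p−2)(1−x)) dx, J₄ := ∫₀¹ log(a−x)/(a+(p−2)(1−x))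 dx, J₅ := ∫₀¹ (a−x)(1−x)^{d₁−1}/(a+(p−2)(1−x))^{d₁} dx, and J₁', J₂', J₃', J₄', J₅' the analogous integrals with q and d₂ in place of p and d₁: k₄ := p J₁ + q J₁', k₅ := 2 C_p κ_p p^{d₁} J₅ + 2 C_q κ_q q^{d₂} J₅', and k₆ := p [ log(C_p p^{d₁−1}/C') J₁ + (d₁−1)(J₃ − J₂) + J₄ ] + q [ log(C_q q^{d₂−1}/C'') J₁' + (d₂−1)(J₃' − J₂') + J₄' ]. -/

import Mathlib

open Real MeasureTheory Set intervalIntegral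

private lemma log_II01 : IntervalIntegrable Real.log volume 0 1 := by
  have h : IntervalIntegrable (fun x : ℝ => -Real.log x) volume 0 1 := by
    apply intervalIntegrable_deriv_of_nonneg (g := fun x : ℝ => x - x * Real.log x)
    · exact (continuous_id.sub Real.continuous_mul_log).continuousOn
    · intro x hx
      rw [show min (0:ℝ) 1 = 0 by norm_num, show max (0:ℝ) 1 = 1 by norm_num] at hx
      have := (hasDerivAt_id x).sub (Real.hasDerivAt_mul_log hx.1.ne')
      exact this.congr_deriv (by ring)
    · intro x hx
      rw [show min (0:ℝ) 1 = 0 by norm_num, show max (0:ℝ) 1 = 1 by norm_num] at hx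
      have := Real.log_nonpos hx.1.le hx.2.le
      linarith
  have h2 := h.neg
  have : (-fun x : ℝ => -Real.log x) = Real.log := by funext x; simp
  rwa [this] at h2

private lemma log1x_II01 : IntervalIntegrable (fun x => Real.log (1 - x)) volume 0 1 := by
  have h := (log_II01.comp_sub_left 1).symm
  norm_num at h
  exact h

private noncomputable def stmtG (a r d C K Cc t : ℝ) : ℝ → ℝ := fun x =>
  (r * (Real.log (C * r ^ (d - 1) / Cc) + Real.log t)) * (1 / (a + (r - 2) * (1 - x)))
  + r * (Real.log (a - x) / (a + (r - 2) * (1 - x)))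
  + (r * (d - 1)) * (Real.log (1 - x) / (a + (r - 2) * (1 - x)))
  - (r * (d - 1)) * (Real.log (a + (r - 2) * (1 - x)) / (a + (r - 2) * (1 - x)))
  - (2 * C * K * r ^ d * t) * ((a - x) * (1 - x) ^ (d - 1) / (a + (r - 2) * (1 - x)) ^ d)

section aux
variable {a r d : ℝ}

private lemma Dpos (ha : 2 ≤ a) (hr : 2 < r) : ∀ x ∈ uIcc (0:ℝ) 1, 0 < a + (r - 2) * (1 - x) := by
  intro x hx
  rw [uIcc_of_le zero_le_one] at hx
  have h1 : 0 ≤ (r - 2) * (1 - x) := mul_nonneg (by linarith) (by linarith [hx.2])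
  linarith

private lemma II1 (ha : 2 ≤ a) (hr : 2 < r) : IntervalIntegrable (fun x => 1 / (a + (r - 2) * (1 - x))) volume 0 1 :=
  (ContinuousOn.div continuousOn_const (by fun_prop) fun x hx => (Dpos ha hr x hx).ne').intervalIntegrable

private lemma II2 (ha : 2 ≤ a) (hr : 2 < r) : IntervalIntegrable
    (fun x => Real.log (a + (r - 2) * (1 - x)) / (a + (r - 2) * (1 - x))) volume 0 1 := by
  have hc : ContinuousOn (fun x : ℝ => a + (r - 2) * (1 - x)) (uIcc (0:ℝ) 1) := by fun_prop
  exact ((hc.log fun x hx => (Dpos ha hr x hx).ne').div hc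
    fun x hx => (Dpos ha hr x hx).ne').intervalIntegrable

private lemma II4 (ha : 2 ≤ a) (hr : 2 < r) : IntervalIntegrable
    (fun x => Real.log (a - x) / (a + (r - 2) * (1 - x))) volume 0 1 := by
  have hax : ∀ x ∈ uIcc (0:ℝ) 1, a - x ≠ 0 := by
    intro x hx
    rw [uIcc_of_le zero_le_one] at hx
    have : (0:ℝ) < a - x := by linarith [hx.2]
    exact this.ne'
  exact ((ContinuousOn.log (by fun_prop) hax).div (by fun_prop)
    fun x hx => (Dpos ha hr x hx).ne').intervalIntegrable

private lemma II5 (ha : 2 ≤ a) (hr : 2 < r) (hd : 1 < d) : IntervalIntegrable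
    (fun x => (a - x) * (1 - x) ^ (d - 1) / (a + (r - 2) * (1 - x)) ^ d) volume 0 1 := by
  have hnum : ContinuousOn (fun x : ℝ => (a - x) * (1 - x) ^ (d - 1)) (uIcc (0:ℝ) 1) := by
    apply ContinuousOn.mul (by fun_prop)
    exact ContinuousOn.rpow_const (by fun_prop) fun x _ => Or.inr (by linarith)
  have hden : ContinuousOn (fun x : ℝ => (a + (r - 2) * (1 - x)) ^ d) (uIcc (0:ℝ) 1) :=
    ContinuousOn.rpow_const (by fun_prop) fun x hx => Or.inl (Dpos ha hr x hx).ne'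
  exact (hnum.div hden fun x hx =>
    (Real.rpow_pos_of_pos (Dpos ha hr x hx) d).ne').intervalIntegrable

private lemma II3 (ha : 2 ≤ a) (hr : 2 < r) : IntervalIntegrable
    (fun x => Real.log (1 - x) / (a + (r - 2) * (1 - x))) volume 0 1 := by
  have h := log1x_II01.mul_continuousOn
    (g := fun x => 1 / (a + (r - 2) * (1 - x)))
    (ContinuousOn.div continuousOn_const (by fun_prop) fun x hx => (Dpos ha hr x hx).ne')
  have e : (fun x => Real.log (1 - x) * (1 / (a + (r - 2) * (1 - x))))
      = fun x => Real.log (1 - x) / (a + (r - 2) * (1 - x)) := by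
    funext x; rw [mul_one_div]
  rwa [e] at h

private lemma stmtG_II (ha : 2 ≤ a) (hr : 2 < r) (hd : 1 < d) (C K Cc t : ℝ) :
    IntervalIntegrable (stmtG a r d C K Cc t) volume 0 1 := by
  unfold stmtG
  exact (((((II1 ha hr).const_mul _).add ((II4 ha hr).const_mul _)).add
    ((II3 ha hr).const_mul _)).sub ((II2 ha hr).const_mul _)).sub ((II5 ha hr hd).const_mul _)

private lemma stmtG_val (ha : 2 ≤ a) (hr : 2 < r) (hd : 1 < d) (C K Cc t : ℝ) :
    ∫ x in (0:ℝ)..1, stmtG a r d C K Cc t x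
      = (r * (Real.log (C * r ^ (d - 1) / Cc) + Real.log t)) *
          (∫ x in (0:ℝ)..1, 1 / (a + (r - 2) * (1 - x)))
        + r * (∫ x in (0:ℝ)..1, Real.log (a - x) / (a + (r - 2) * (1 - x)))
        + (r * (d - 1)) * (∫ x in (0:ℝ)..1, Real.log (1 - x) / (a + (r - 2) * (1 - x)))
        - (r * (d - 1)) *
            (∫ x in (0:ℝ)..1, Real.log (a + (r - 2) * (1 - x)) / (a + (r - 2) * (1 - x)))
        - (2 * C * K * r ^ d * t) *
            (∫ x in (0:ℝ)..1, (a - x) * (1 - x) ^ (d - 1) / (a + (r - 2) * (1 - x)) ^ d) := by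
  unfold stmtG
  rw [integral_sub ((((((II1 ha hr).const_mul _).add ((II4 ha hr).const_mul _)).add
        ((II3 ha hr).const_mul _)).sub ((II2 ha hr).const_mul _)))
      ((II5 ha hr hd).const_mul _),
    integral_sub ((((II1 ha hr).const_mul _).add ((II4 ha hr).const_mul _)).add
        ((II3 ha hr).const_mul _)) ((II2 ha hr).const_mul _),
    integral_add (((II1 ha hr).const_mul _).add ((II4 ha hr).const_mul _))
      ((II3 ha hr).const_mul _),
    integral_add ((II1 ha hr).const_mul _) ((II4 ha hr).const_mul _),
    intervalIntegral.integral_const_mul, intervalIntegral.integral_const_mul, intervalIntegral.integral_const_mul, intervalIntegral.integral_const_mul,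
    intervalIntegral.integral_const_mul]

end aux

private lemma key_pt {a r d t : ℝ} (C K Cc : ℝ) (ha : 2 ≤ a) (hr : 2 < r) (hd : 1 < d)
    (hC : 0 < C) (hCc : 0 < Cc) (ht : 0 < t) {τ : ℝ} (hτ : τ ∈ Set.Ioo 0 t) :
    r / ((a + r - 2) * t - (r - 2) * τ) *
        Real.log (C * r ^ (d - 1) * (a * t - τ) * (t - τ) ^ (d - 1) /
          (Cc * ((a + r - 2) * t - (r - 2) * τ) ^ (d - 1))) -
      2 * C * K * r ^ d * (a * t - τ) * (t - τ) ^ (d - 1) /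
        ((a + r - 2) * t - (r - 2) * τ) ^ d
    = t⁻¹ * stmtG a r d C K Cc t (τ / t) := by
  obtain ⟨hτ0, hτt⟩ := hτ
  set x := τ / t with hxdef
  have hx0 : 0 < x := div_pos hτ0 ht
  have hx1 : x < 1 := (div_lt_one ht).2 hτt
  have hτeq : τ = t * x := by rw [hxdef]; field_simp
  have h1x : 0 < 1 - x := by linarith
  have hax : 0 < a - x := by linarith
  have hr0 : 0 < r := by linarith
  have hD : 0 < a + (r - 2) * (1 - x) := by nlinarith
  have e1 : (a + r - 2) * t - (r - 2) * τ = t * (a + (r - 2) * (1 - x)) := by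
    rw [hτeq]; ring
  have e2 : a * t - τ = t * (a - x) := by rw [hτeq]; ring
  have e3 : t - τ = t * (1 - x) := by rw [hτeq]; ring
  rw [e1, e2, e3]
  have e4 : (t * (1 - x)) ^ (d - 1) = t ^ (d - 1) * (1 - x) ^ (d - 1) :=
    Real.mul_rpow ht.le h1x.le
  have e5 : (t * (a + (r - 2) * (1 - x))) ^ (d - 1)
      = t ^ (d - 1) * (a + (r - 2) * (1 - x)) ^ (d - 1) := Real.mul_rpow ht.le hD.le
  have e6 : (t * (a + (r - 2) * (1 - x))) ^ d = t ^ d * (a + (r - 2) * (1 - x)) ^ d :=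
    Real.mul_rpow ht.le hD.le
  rw [e4, e5, e6]
  have htd : 0 < t ^ (d - 1) := Real.rpow_pos_of_pos ht _
  have hrd : 0 < r ^ (d - 1) := Real.rpow_pos_of_pos hr0 _
  have hDd1 : 0 < (a + (r - 2) * (1 - x)) ^ (d - 1) := Real.rpow_pos_of_pos hD _
  have hDd : 0 < (a + (r - 2) * (1 - x)) ^ d := Real.rpow_pos_of_pos hD _
  have h1xd : 0 < (1 - x) ^ (d - 1) := Real.rpow_pos_of_pos h1x _
  have eArg : C * r ^ (d - 1) * (t * (a - x)) * (t ^ (d - 1) * (1 - x) ^ (d - 1)) /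
        (Cc * (t ^ (d - 1) * (a + (r - 2) * (1 - x)) ^ (d - 1)))
      = C * r ^ (d - 1) / Cc * t * (a - x) *
          ((1 - x) ^ (d - 1) / (a + (r - 2) * (1 - x)) ^ (d - 1)) := by
    field_simp
  rw [eArg]
  have hlog : Real.log (C * r ^ (d - 1) / Cc * t * (a - x) *
        ((1 - x) ^ (d - 1) / (a + (r - 2) * (1 - x)) ^ (d - 1)))
      = Real.log (C * r ^ (d - 1) / Cc) + Real.log t + Real.log (a - x) +
          ((d - 1) * Real.log (1 - x) - (d - 1) * Real.log (a + (r - 2) * (1 - x))) := by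
    rw [Real.log_mul (by positivity) (by positivity),
      Real.log_mul (by positivity) (by positivity),
      Real.log_mul (by positivity) (by positivity),
      Real.log_div (by positivity) (by positivity),
      Real.log_div h1xd.ne' hDd1.ne', Real.log_rpow h1x, Real.log_rpow hD]
  rw [hlog]
  have etd : t ^ d = t ^ (d - 1) * t := by
    rw [show d = d - 1 + 1 by ring, Real.rpow_add_one ht.ne' (d - 1)]
    ring_nf
  rw [etd]
  unfold stmtG
  field_simp
  ring
/-- As `ξ → t⁻`, `∫₀^ξ Q(τ) dτ` tends to `k₄ log t − k₅ t + k₆`, with `Q` as in the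
Appendix and the explicit constants `k₄, k₅, k₆` defined through the integrals
`J₁,…,J₅` (for `p, d₁`) and `J₁',…,J₅'` (for `q, d₂`). -/
theorem stmt_15 (a p q d₁ d₂ Cp Cq C' C'' κp κq t : ℝ)
    (ha : 2 ≤ a) (hp : 2 < p) (hq : 2 < q) (hd₁ : 1 < d₁) (hd₂ : 1 < d₂)
    (hCp : 0 < Cp) (hCq : 0 < Cq) (hC' : 0 < C') (hC'' : 0 < C'')
    (hκp : 0 < κp) (hκq : 0 < κq) (ht : 0 < t)
    (Q : ℝ → ℝ)
    (hQ : ∀ τ ∈ Set.Ico (0:ℝ) t, Q τ =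
      p / ((a + p - 2) * t - (p - 2) * τ) *
          Real.log (Cp * p ^ (d₁ - 1) * (a * t - τ) * (t - τ) ^ (d₁ - 1) /
            (C' * ((a + p - 2) * t - (p - 2) * τ) ^ (d₁ - 1))) -
        2 * Cp * κp * p ^ d₁ * (a * t - τ) * (t - τ) ^ (d₁ - 1) /
          ((a + p - 2) * t - (p - 2) * τ) ^ d₁ +
        q / ((a + q - 2) * t - (q - 2) * τ) *
          Real.log (Cq * q ^ (d₂ - 1) * (a * t - τ) * (t - τ) ^ (d₂ - 1) /
            (C'' * ((a + q - 2) * t - (q - 2) * τ) ^ (d₂ - 1))) -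
        2 * Cq * κq * q ^ d₂ * (a * t - τ) * (t - τ) ^ (d₂ - 1) /
          ((a + q - 2) * t - (q - 2) * τ) ^ d₂)
    (J₁ J₂ J₃ J₄ J₅ J₁' J₂' J₃' J₄' J₅' k₄ k₅ k₆ : ℝ)
    (hJ₁ : J₁ = ∫ x in (0:ℝ)..1, 1 / (a + (p - 2) * (1 - x)))
    (hJ₂ : J₂ = ∫ x in (0:ℝ)..1,
      Real.log (a + (p - 2) * (1 - x)) / (a + (p - 2) * (1 - x)))
    (hJ₃ : J₃ = ∫ x in (0:ℝ)..1, Real.log (1 - x) / (a + (p - 2) * (1 - x)))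
    (hJ₄ : J₄ = ∫ x in (0:ℝ)..1, Real.log (a - x) / (a + (p - 2) * (1 - x)))
    (hJ₅ : J₅ = ∫ x in (0:ℝ)..1,
      (a - x) * (1 - x) ^ (d₁ - 1) / (a + (p - 2) * (1 - x)) ^ d₁)
    (hJ₁' : J₁' = ∫ x in (0:ℝ)..1, 1 / (a + (q - 2) * (1 - x)))
    (hJ₂' : J₂' = ∫ x in (0:ℝ)..1,
      Real.log (a + (q - 2) * (1 - x)) / (a + (q - 2) * (1 - x)))
    (hJ₃' : J₃' = ∫ x in (0:ℝ)..1, Real.log (1 - x) / (a + (q - 2) * (1 - x)))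
    (hJ₄' : J₄' = ∫ x in (0:ℝ)..1, Real.log (a - x) / (a + (q - 2) * (1 - x)))
    (hJ₅' : J₅' = ∫ x in (0:ℝ)..1,
      (a - x) * (1 - x) ^ (d₂ - 1) / (a + (q - 2) * (1 - x)) ^ d₂)
    (hk₄ : k₄ = p * J₁ + q * J₁')
    (hk₅ : k₅ = 2 * Cp * κp * p ^ d₁ * J₅ + 2 * Cq * κq * q ^ d₂ * J₅')
    (hk₆ : k₆ = p * (Real.log (Cp * p ^ (d₁ - 1) / C') * J₁ + (d₁ - 1) * (J₃ - J₂) + J₄) +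
      q * (Real.log (Cq * q ^ (d₂ - 1) / C'') * J₁' + (d₂ - 1) * (J₃' - J₂') + J₄')) :
    Filter.Tendsto (fun ξ => ∫ τ in (0:ℝ)..ξ, Q τ) (nhdsWithin t (Set.Iio t))
      (nhds (k₄ * Real.log t - k₅ * t + k₆)) := by

  have hGp := stmtG_II (a := a) (r := p) (d := d₁) ha hp hd₁ Cp κp C' t
  have hGq := stmtG_II (a := a) (r := q) (d := d₂) ha hq hd₂ Cq κq C'' t
  set G : ℝ → ℝ := fun x => stmtG a p d₁ Cp κp C' t x + stmtG a q d₂ Cq κq C'' t x with hGdef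
  have hG : IntervalIntegrable G volume 0 1 := hGp.add hGq
  -- integrability of τ ↦ G (τ / t) on [0, t]
  have hcomp : IntervalIntegrable (fun τ => G (τ / t)) volume 0 t := by
    have h := hG.comp_mul_right (c := t⁻¹)
    simp only [div_eq_mul_inv] at *
    norm_num [ht.ne'] at h
    convert h using 2
  have hFint : IntervalIntegrable (fun τ => t⁻¹ * G (τ / t)) volume 0 t := hcomp.const_mul _
  -- Q agrees a.e. with this function on (0, t]
  have hQF : (fun τ => t⁻¹ * G (τ / t)) =ᵐ[volume.restrict (Set.uIoc (0:ℝ) t)] Q := by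
    have h1 : ∀ᵐ τ ∂(volume.restrict (Set.uIoc (0:ℝ) t)), τ ∈ Set.uIoc (0:ℝ) t :=
      MeasureTheory.ae_restrict_mem measurableSet_uIoc
    have h2 : ∀ᵐ τ ∂(volume.restrict (Set.uIoc (0:ℝ) t)), τ ≠ t := by
      apply MeasureTheory.ae_restrict_of_ae
      have : volume ({t} : Set ℝ) = 0 := Real.volume_singleton
      exact (MeasureTheory.measure_eq_zero_iff_ae_notMem.mp this).mono fun x hx => hx
    filter_upwards [h1, h2] with τ hτ hne
    rw [Set.uIoc_of_le ht.le] at hτ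
    have hτ' : τ ∈ Set.Ioo 0 t := ⟨hτ.1, lt_of_le_of_ne hτ.2 hne⟩
    rw [hQ τ ⟨hτ'.1.le, hτ'.2⟩]
    have ep := key_pt Cp κp C' ha hp hd₁ hCp hC' ht hτ'
    have eq' := key_pt Cq κq C'' ha hq hd₂ hCq hC'' ht hτ'
    rw [hGdef]
    simp only [mul_add]
    linarith [ep, eq']
  have hQint : IntervalIntegrable Q volume 0 t := hFint.congr_ae hQF
  -- the value of the full integral
  have hval : ∫ τ in (0:ℝ)..t, Q τ = k₄ * Real.log t - k₅ * t + k₆ := by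
    have hcongr : ∫ τ in (0:ℝ)..t, Q τ = ∫ τ in (0:ℝ)..t, t⁻¹ * G (τ / t) := by
      apply intervalIntegral.integral_congr_ae
      have := (MeasureTheory.ae_restrict_iff' measurableSet_uIoc).mp hQF
      filter_upwards [this] with τ hτ hmem
      exact (hτ hmem).symm
    rw [hcongr, intervalIntegral.integral_const_mul,
      intervalIntegral.integral_comp_div (f := G) ht.ne', zero_div, div_self ht.ne',
      smul_eq_mul, ← mul_assoc, inv_mul_cancel₀ ht.ne', one_mul]
    rw [hGdef]
    rw [intervalIntegral.integral_add hGp hGq]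
    rw [stmtG_val ha hp hd₁ Cp κp C' t, stmtG_val ha hq hd₂ Cq κq C'' t]
    rw [hk₄, hk₅, hk₆, hJ₁, hJ₂, hJ₃, hJ₄, hJ₅, hJ₁', hJ₂', hJ₃', hJ₄', hJ₅']
    ring
  -- continuity of the primitive
  have hcont : ContinuousWithinAt (fun b => ∫ τ in (0:ℝ)..b, Q τ) (Set.Icc 0 t) t := by
    apply intervalIntegral.continuousWithinAt_primitive (by simp)
    rwa [show ((0:ℝ) ⊓ 0) = 0 by simp, show ((0:ℝ) ⊔ t) = t by simp [ht.le]]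
  have htend : Filter.Tendsto (fun ξ => ∫ τ in (0:ℝ)..ξ, Q τ)
      (nhdsWithin t (Set.Icc 0 t)) (nhds (∫ τ in (0:ℝ)..t, Q τ)) := hcont
  rw [hval] at htend
  rw [← nhdsWithin_Ioo_eq_nhdsLT ht]
  exact htend.mono_left (nhdsWithin_mono _ Set.Ioo_subset_Icc_self)
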